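/- Let S be a left simple semigroup and P a congruence on S such that S/P is a group with identity element H (as a congruence class). Then H is a reflexive unitary subsemigroup of S and P equals the principal congruence P_H. -/
import Mathlib


open Pointwise

/-- A nonempty subset closed under multiplication. -/
def IsSubsemigroup {S : Type*} [Mul S] (H : Set S) : Prop :=
  H.Nonempty ∧ ∀ a ∈ H, ∀ b ∈ H, a * b ∈ H

/-- `H` is reflexive in `S`: `ab ∈ H` implies `ba ∈ H`. -/
def IsReflexive {S : Type*} [Mul S] (H : Set S) : Prop :=
  ∀ a b : S, a * b ∈ H → b * a ∈ H

/-- `H` is unitary in `S`. -/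
def IsUnitary {S : Type*} [Mul S] (H : Set S) : Prop :=
  (∀ a b : S, a * b ∈ H → a ∈ H → b ∈ H) ∧
  (∀ a b : S, a * b ∈ H → b ∈ H → a ∈ H)

/-- `H` is reflexive in the subsemigroup `T`. -/
def IsReflexiveIn {S : Type*} [Mul S] (H T : Set S) : Prop :=
  ∀ a ∈ T, ∀ b ∈ T, a * b ∈ H → b * a ∈ H

/-- `H` is unitary in the subsemigroup `T`. -/
def IsUnitaryIn {S : Type*} [Mul S] (H T : Set S) : Prop :=
  (∀ a ∈ T, ∀ b ∈ T, a * b ∈ H → a ∈ H → b ∈ H) ∧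
  (∀ a ∈ T, ∀ b ∈ T, a * b ∈ H → b ∈ H → a ∈ H)

/-- A semigroup is left simple iff `Sa = S` for every `a`. -/
def LeftSimple (S : Type*) [Mul S] : Prop := ∀ a b : S, ∃ s : S, s * a = b

/-- The principal relation `P_H` determined by `H`:
`(a,b) ∈ P_H` iff `∀ s t, sat ∈ H ↔ sbt ∈ H`. -/
def PrinCong {S : Type*} [Mul S] (H : Set S) (a b : S) : Prop :=
  ∀ s t : S, s * a * t ∈ H ↔ s * b * t ∈ H

/-- `f : S → G` realizes the group `G` as the factor semigroup `S/P_H`,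
with identity element the class `H`. -/
def IsQuotientGroupBy {S : Type*} [Mul S] (H : Set S) {G : Type*} [Group G]
    (f : S → G) : Prop :=
  Function.Surjective f ∧ (∀ a b : S, f (a * b) = f a * f b) ∧
  (∀ a b : S, f a = f b ↔ PrinCong H a b) ∧ (∀ a : S, a ∈ H ↔ f a = 1)

/-- `f` realizes the group `G` as the factor `T/P_K` of the subsemigroup `T`
by the principal congruence of `T` determined by `K ⊆ T`, with identity class `K`. -/
def IsFactorGroupOn {S : Type*} [Mul S] (T K : Set S) {G : Type*} [Group G]
    (f : {x : S // x ∈ T} → G) : Prop :=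
  Function.Surjective f ∧
  (∀ (x y : S) (hx : x ∈ T) (hy : y ∈ T) (hxy : x * y ∈ T),
    f ⟨x * y, hxy⟩ = f ⟨x, hx⟩ * f ⟨y, hy⟩) ∧
  (∀ x y : {x : S // x ∈ T}, f x = f y ↔
    ∀ s t : {x : S // x ∈ T}, ((s : S) * x * t ∈ K ↔ (s : S) * y * t ∈ K)) ∧
  (∀ x : {x : S // x ∈ T}, f x = 1 ↔ (x : S) ∈ K)

/-- The factor groups `T/P_K` and `T'/P_{K'}` are isomorphic. -/
def FactorsIsomorphic {S : Type*} [Mul S] (T K T' K' : Set S) : Prop :=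
  ∃ (G : Type) (g : Group G) (f : {x : S // x ∈ T} → G)
    (f' : {x : S // x ∈ T'} → G),
    @IsFactorGroupOn S _ T K G g f ∧ @IsFactorGroupOn S _ T' K' G g f'

/-- If `P` is a congruence on a left simple semigroup `S` such that `S/P` is a
group with identity class `H`, then `H` is a reflexive unitary subsemigroup of
`S` and `P = P_H`. -/
theorem group_congruence_identity_class {S : Type*} [Semigroup S]
    (hS : LeftSimple S) (P : S → S → Prop) (hequiv : Equivalence P)
    (hcomp : ∀ a b c d : S, P a b → P c d → P (a * c) (b * d))
    {G : Type*} [Group G] (f : S → G) (hsurj : Function.Surjective f)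
    (hmul : ∀ a b : S, f (a * b) = f a * f b)
    (hker : ∀ a b : S, f a = f b ↔ P a b)
    (H : Set S) (hH : H = {a : S | f a = 1}) :
    IsSubsemigroup H ∧ IsReflexive H ∧ IsUnitary H ∧
      ∀ a b : S, P a b ↔ PrinCong H a b := by
  subst hH
  have hmem : ∀ a : S, a ∈ {a : S | f a = 1} ↔ f a = 1 := fun a => Iff.rfl
  refine ⟨⟨?_, ?_⟩, ?_, ⟨?_, ?_⟩, ?_⟩
  · obtain ⟨a, ha⟩ := hsurj 1
    exact ⟨a, ha⟩
  · intro a ha b hb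
    simp only [hmem, hmul] at *
    rw [ha, hb, one_mul]
  · intro a b hab
    simp only [hmem, hmul] at *
    calc f b * f a = (f a)⁻¹ * (f a * f b) * f a := by group
    _ = 1 := by rw [hab]; group
  · intro a b hab ha
    simp only [hmem, hmul] at *
    rwa [ha, one_mul] at hab
  · intro a b hab hb
    simp only [hmem, hmul] at *
    rwa [hb, mul_one] at hab
  · intro a b
    constructor
    · intro hab s t
      have : f a = f b := (hker a b).mpr hab
      simp only [hmem, hmul, this]
    · intro h
      obtain ⟨s, hs⟩ := hsurj (f a)⁻¹
      obtain ⟨t, ht⟩ := hsurj 1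
      have h1 : s * a * t ∈ {a : S | f a = 1} := by
        simp only [hmem, hmul, hs, ht]; group
      have h2 := (h s t).mp h1
      simp only [hmem, hmul, hs, ht, mul_one] at h2
      apply (hker a b).mp
      have : f a * ((f a)⁻¹ * f b) = f a * 1 := by rw [h2]
      simpa using this.symm
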